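/- arXiv:1204.6517 — 4 statements merged into one kernel-verified Lean document; each statement's English description precedes it below -/
import Mathlib

section
/- Let h = (s, p) be a rational Γ-inner function. Then h has a royal node on the unit circle if and only if h is full, i.e. the sup-norm of s over the closed unit disc equals 2. -/
open Complex Metric Set MeasureTheory Filter ComplexConjugate

noncomputable section

/-- A finite Blaschke product of degree `n`. -/
def IsBlaschkeOfDegree (f : ℂ → ℂ) (n : ℕ) : Prop :=
  ∃ (c : ℂ) (α : Fin n → ℂ), ‖c‖ = 1 ∧ (∀ j, ‖α j‖ < 1) ∧
    ∀ z : ℂ, f z = c * ∏ j, (z - α j) / (1 - conj (α j) * z)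

/-- A finite Blaschke product (rational inner function). -/
def IsFiniteBlaschke (f : ℂ → ℂ) : Prop := ∃ n, IsBlaschkeOfDegree f n

/-- A Blaschke product of degree at most `n` (the class Bl_n). -/
def BlaschkeDegLE (f : ℂ → ℂ) (n : ℕ) : Prop := ∃ d ≤ n, IsBlaschkeOfDegree f d

/-- The closed symmetrized bidisc. -/
def GammaSet : Set (ℂ × ℂ) := {x | ∃ z w : ℂ, ‖z‖ ≤ 1 ∧ ‖w‖ ≤ 1 ∧ x = (z + w, z * w)}

/-- A rational function with no poles in the closed unit disc. -/
def IsRationalDisc (f : ℂ → ℂ) : Prop :=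
  ∃ P Q : Polynomial ℂ, (∀ z : ℂ, ‖z‖ ≤ 1 → Q.eval z ≠ 0) ∧
    ∀ z : ℂ, f z = P.eval z / Q.eval z

/-- A rational analytic map of the disc into Γ. -/
def IsRationalGammaMap (s p : ℂ → ℂ) : Prop :=
  IsRationalDisc s ∧ IsRationalDisc p ∧ ∀ z : ℂ, ‖z‖ < 1 → (s z, p z) ∈ GammaSet

/-- A rational Γ-inner function: rational, maps 𝔻 into Γ, and boundary values on 𝕋
lie in the distinguished boundary bΓ. -/
def IsRationalGammaInner (s p : ℂ → ℂ) : Prop :=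
  IsRationalGammaMap s p ∧
  ∀ lam : ℂ, ‖lam‖ = 1 → ‖p lam‖ = 1 ∧ ‖s lam‖ ≤ 2 ∧ s lam = conj (s lam) * p lam

/-- Membership in the class ℰ_{ν,k}: h = (s,p) is a rational map 𝔻 → Γ and there
exists m ∈ Bl_ν with Φ∘(m,h) = (2mp − s)/(2 − ms) ∈ Bl_{k−1} (stated in
cleared-denominator form). -/
def MemE (ν k : ℕ) (s p : ℂ → ℂ) : Prop :=
  IsRationalGammaMap s p ∧
  ∃ m q : ℂ → ℂ, BlaschkeDegLE m ν ∧ BlaschkeDegLE q (k - 1) ∧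
    ∀ z : ℂ, (2 - m z * s z) * q z = 2 * m z * p z - s z

/-- An inner function: analytic and bounded by 1 on 𝔻 with unimodular radial
boundary values a.e. on 𝕋. -/
def IsInner (f : ℂ → ℂ) : Prop :=
  DifferentiableOn ℂ f (ball (0:ℂ) 1) ∧ (∀ z ∈ ball (0:ℂ) 1, ‖f z‖ ≤ 1) ∧
  ∀ᵐ θ : ℝ, ∃ b : ℂ, ‖b‖ = 1 ∧
    Tendsto (fun r : ℝ => f (r * Complex.exp (Complex.I * θ)))
      (nhdsWithin 1 (Set.Iio 1)) (nhds b)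

/-- A Γ-inner function: analytic map 𝔻 → Γ whose radial boundary values lie a.e.
in the distinguished boundary bΓ. -/
def IsGammaInnerAE (s p : ℂ → ℂ) : Prop :=
  DifferentiableOn ℂ s (ball (0:ℂ) 1) ∧ DifferentiableOn ℂ p (ball (0:ℂ) 1) ∧
  (∀ z ∈ ball (0:ℂ) 1, (s z, p z) ∈ GammaSet) ∧
  ∀ᵐ θ : ℝ, ∃ sb pb : ℂ,
    Tendsto (fun r : ℝ => s (r * Complex.exp (Complex.I * θ)))
      (nhdsWithin 1 (Set.Iio 1)) (nhds sb) ∧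
    Tendsto (fun r : ℝ => p (r * Complex.exp (Complex.I * θ)))
      (nhdsWithin 1 (Set.Iio 1)) (nhds pb) ∧
    ‖pb‖ = 1 ∧ ‖sb‖ ≤ 2 ∧ sb = conj sb * pb

/-- A rational Γ-inner function h = (s,p) has a royal node on the
unit circle iff h is full, i.e. the sup-norm of s over the closed unit disc is 2. -/
theorem royal_node_on_circle_iff_full
    (s p : ℂ → ℂ) (h : IsRationalGammaInner s p) :
    (∃ lam : ℂ, ‖lam‖ = 1 ∧ s lam ^ 2 = 4 * p lam) ↔
      sSup ((fun z => ‖s z‖) '' closedBall (0:ℂ) 1) = 2 := by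
  obtain ⟨⟨hs, hp, hmap⟩, hbd⟩ := h
  -- |s| ≤ 2 on the closed ball
  have hle2 : ∀ z : ℂ, ‖z‖ ≤ 1 → ‖s z‖ ≤ 2 := by
    intro z hz
    rcases lt_or_eq_of_le hz with hz | hz
    · obtain ⟨a, b, ha, hb, hab⟩ := hmap z hz
      have : s z = a + b := congrArg Prod.fst hab
      calc ‖s z‖ = ‖a + b‖ := by rw [this]
        _ ≤ ‖a‖ + ‖b‖ := norm_add_le _ _
        _ ≤ 2 := by linarith
    · exact (hbd z hz).2.1
  have hub : ∀ x ∈ (fun z => ‖s z‖) '' closedBall (0:ℂ) 1, x ≤ 2 := by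
    rintro x ⟨z, hz, rfl⟩
    exact hle2 z (by simpa using hz)
  -- royal node from a circle point with ‖s λ‖ = 2
  have hroyal : ∀ lam : ℂ, ‖lam‖ = 1 → ‖s lam‖ = 2 → s lam ^ 2 = 4 * p lam := by
    intro lam hlam hnorm
    obtain ⟨_, _, hcon⟩ := hbd lam hlam
    have : s lam ^ 2 = (s lam * conj (s lam)) * p lam := by
      rw [sq]; nth_rewrite 2 [hcon]; ring
    rw [this, Complex.mul_conj]
    have : (Complex.normSq (s lam) : ℂ) = 4 := by
      rw [Complex.normSq_eq_norm_sq]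
      norm_cast
      rw [hnorm]; norm_num
    rw [this]
  constructor
  · rintro ⟨lam, hlam, hsq⟩
    have hslam : ‖s lam‖ = 2 := by
      have h4 : ‖s lam‖ ^ 2 = 4 := by
        have := congrArg norm hsq
        rw [norm_pow, norm_mul, (hbd lam hlam).1] at this
        simpa using this
      nlinarith [norm_nonneg (s lam)]
    refine le_antisymm (Real.sSup_le hub (by norm_num)) ?_
    rw [← hslam]
    exact le_csSup ⟨2, hub⟩ ⟨lam, by simpa using hlam.le, rfl⟩
  · intro hsup
    -- s is differentiable on the ball and continuous on the closed ball
    obtain ⟨P, Q, hQ, hPQ⟩ := hs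
    have hdc : DiffContOnCl ℂ s (ball (0:ℂ) 1) := by
      constructor
      · intro z hz
        have hz' : ‖z‖ ≤ 1 := by simpa using (mem_ball_zero_iff.mp hz).le
        have : DifferentiableAt ℂ (fun z => P.eval z / Q.eval z) z :=
          (P.differentiableAt).div (Q.differentiableAt) (hQ z hz')
        exact (this.congr_of_eventuallyEq
          (Filter.Eventually.of_forall fun w => (hPQ w))).differentiableWithinAt
      · rw [closure_ball (0:ℂ) one_ne_zero]
        intro z hz
        have hz' : ‖z‖ ≤ 1 := by simpa using hz
        have : ContinuousAt (fun z => P.eval z / Q.eval z) z :=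
          (P.continuousAt).div (Q.continuousAt) (hQ z hz')
        exact ((this.congr (Filter.Eventually.of_forall fun w => (hPQ w).symm)).continuousWithinAt)
    obtain ⟨lam, hlamF, hmax⟩ := Complex.exists_mem_frontier_isMaxOn_norm
      isBounded_ball (nonempty_ball.mpr one_pos) hdc
    rw [frontier_ball (0:ℂ) one_ne_zero, mem_sphere_zero_iff_norm] at hlamF
    rw [closure_ball (0:ℂ) one_ne_zero] at hmax
    have hslam : ‖s lam‖ = 2 := by
      refine le_antisymm (hle2 lam hlamF.le) ?_
      rw [← hsup]
      refine Real.sSup_le ?_ (norm_nonneg _)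
      rintro x ⟨z, hz, rfl⟩
      exact hmax hz
    exact ⟨lam, hlamF, hroyal lam hlamF hslam⟩
end
end

section
/- Let h = (s, p) be a nonconstant rational Γ-inner function, let ζ ∈ 𝕋 be a royal node of h with h(ζ) = (2\bar{ω}, \bar{ω}²), ω ∈ 𝕋, and let υ be a finite Blaschke product with υ(ζ) = ω. Then it cannot happen that both derivatives vanish: (2υp − s)'(ζ) = 0 and (2 − υs)'(ζ) = 0 lead to a contradiction; i.e. Φ ∘ (υ, h) has at most one cancellation at ζ. -/
open Complex Metric Set MeasureTheory Filter ComplexConjugate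

noncomputable section

/-- composition of complex-differentiable map with a real curve -/
lemma hasDerivAt_comp_real {f : ℂ → ℂ} {d : ℂ} {u : ℝ → ℂ} {u' : ℂ} {t : ℝ}
    (hf : HasDerivAt f d (u t)) (hu : HasDerivAt u u' t) :
    HasDerivAt (fun t => f (u t)) (u' * d) t := by
  have h := HasFDerivAt.comp_hasDerivAt t (hf.hasFDerivAt.restrictScalars ℝ) hu
  simpa [Function.comp_def, smul_eq_mul, mul_comm] using h

lemma hasDerivAt_normSq_comp {u : ℝ → ℂ} {b : ℂ} {t : ℝ} (hu : HasDerivAt u b t) :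
    HasDerivAt (fun t => Complex.normSq (u t)) (2 * ((conj (u t)) * b).re) t := by
  have hre : HasDerivAt (fun t => (u t).re) b.re t := by
    simpa [Function.comp_def] using HasFDerivAt.comp_hasDerivAt t Complex.reCLM.hasFDerivAt hu
  have him : HasDerivAt (fun t => (u t).im) b.im t := by
    simpa [Function.comp_def] using HasFDerivAt.comp_hasDerivAt t Complex.imCLM.hasFDerivAt hu
  have h := (hre.mul hre).add (him.mul him)
  have hfun : (fun t => Complex.normSq (u t))
      = fun t => (u t).re * (u t).re + (u t).im * (u t).im := by
    funext x; exact Complex.normSq_apply _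
  rw [hfun]
  refine h.congr_deriv ?_
  simp [Complex.mul_re, Complex.conj_re, Complex.conj_im]
  ring

lemma deriv_nonneg_side {φ : ℝ → ℝ} {D : ℝ} (h : HasDerivAt φ D 1)
    (hle : ∀ r : ℝ, 0 ≤ r → r < 1 → φ r ≤ φ 1) : 0 ≤ D := by
  have h' : HasDerivWithinAt φ D (Set.Ioo (0:ℝ) 1) 1 := h.hasDerivWithinAt
  rw [hasDerivWithinAt_iff_tendsto_slope] at h'
  have hsub : Set.Ioo (0:ℝ) 1 \ {1} = Set.Ioo (0:ℝ) 1 := by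
    apply Set.diff_singleton_eq_self; simp
  rw [hsub] at h'
  have hne : (nhdsWithin (1:ℝ) (Set.Ioo (0:ℝ) 1)).NeBot :=
    right_nhdsWithin_Ioo_neBot (by norm_num)
  refine ge_of_tendsto h' ?_
  filter_upwards [self_mem_nhdsWithin] with x hx
  rw [slope_def_field]
  have h1 : φ x - φ 1 ≤ 0 := by linarith [hle x hx.1.le hx.2]
  have h2 : x - 1 < 0 := by linarith [hx.2]
  rw [div_nonneg_iff]
  right; exact ⟨h1, h2.le⟩

/-- maximum principle for the real part, via `exp`. -/
lemma re_nonpos_of_boundary {m : ℂ → ℂ} (hm : DifferentiableOn ℂ m (closedBall 0 1))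
    (hb : ∀ lam : ℂ, ‖lam‖ = 1 → (m lam).re ≤ 0) {z : ℂ} (hz : ‖z‖ ≤ 1) : (m z).re ≤ 0 := by
  have hdiff : DifferentiableOn ℂ (fun w => Complex.exp (m w)) (closedBall 0 1) := hm.cexp
  have hcl : closure (ball (0:ℂ) 1) = closedBall 0 1 := closure_ball 0 one_ne_zero
  have hfr : frontier (ball (0:ℂ) 1) = sphere 0 1 := frontier_ball 0 one_ne_zero
  have key : ‖Complex.exp (m z)‖ ≤ 1 := by
    refine Complex.norm_le_of_forall_mem_frontier_norm_le (U := ball (0:ℂ) 1)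
      (f := fun w => Complex.exp (m w)) (z := z) isBounded_ball ?_ ?_ ?_
    · exact DifferentiableOn.diffContOnCl (by rwa [hcl])
    · intro w hw
      rw [hfr, mem_sphere_zero_iff_norm] at hw
      rw [Complex.norm_exp]
      exact Real.exp_le_one_iff.mpr (hb w hw)
    · rw [hcl]; exact mem_closedBall_zero_iff.mpr hz
  rw [Complex.norm_exp, Real.exp_le_one_iff] at key
  exact key

/-- The phasar derivative of an inner-type function at a boundary point is a
nonnegative real. -/
lemma phasar {f : ℂ → ℂ} {d ζ : ℂ} (hζ : ‖ζ‖ = 1) (hf : HasDerivAt f d ζ)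
    (hin : ∀ z : ℂ, ‖z‖ < 1 → ‖f z‖ ≤ 1)
    (hbd : ∀ lam : ℂ, ‖lam‖ = 1 → ‖f lam‖ = 1) :
    (conj (f ζ) * (ζ * d)).im = 0 ∧ 0 ≤ (conj (f ζ) * (ζ * d)).re := by
  constructor
  · -- tangential direction
    have hu : HasDerivAt (fun t : ℝ => ζ * Complex.exp (Complex.I * t)) (ζ * Complex.I) 0 := by
      have h1 : HasDerivAt (fun w : ℂ => ζ * Complex.exp (Complex.I * w))
          (ζ * Complex.I) (((0:ℝ):ℂ)) := by
        simpa using (((hasDerivAt_id (((0:ℝ):ℂ))).const_mul Complex.I).cexp).const_mul ζ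
      exact h1.comp_ofReal
    have hval : (fun t : ℝ => Complex.normSq (f (ζ * Complex.exp (Complex.I * t))))
        = fun _ => 1 := by
      funext t
      have hn : ‖ζ * Complex.exp (Complex.I * t)‖ = 1 := by
        rw [norm_mul, hζ, Complex.norm_exp]
        simp
      have := hbd _ hn
      rw [Complex.normSq_eq_norm_sq, this]; norm_num
    have hfd : HasDerivAt f d (ζ * Complex.exp (Complex.I * (0:ℝ))) := by simpa using hf
    have hD := hasDerivAt_normSq_comp (hasDerivAt_comp_real (u := fun t : ℝ => ζ * Complex.exp (Complex.I * t)) (t := 0) hfd hu)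
    have hzero : HasDerivAt (fun t : ℝ => Complex.normSq (f (ζ * Complex.exp (Complex.I * t))))
        0 0 := by rw [hval]; exact hasDerivAt_const _ _
    have := hD.unique hzero
    have h2 : (conj (f ζ) * (ζ * Complex.I * d)).re = 0 := by
      simp only [Complex.I_mul_im, Complex.ofReal_zero, mul_zero, Complex.exp_zero, mul_one] at this ⊢
      linarith
    have h3 : conj (f ζ) * (ζ * Complex.I * d) = Complex.I * (conj (f ζ) * (ζ * d)) := by ring
    rw [h3] at h2
    simp only [Complex.mul_re, Complex.I_re, Complex.I_im, Complex.mul_im] at h2 ⊢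
    linarith
  · -- radial direction
    have hu : HasDerivAt (fun r : ℝ => (r : ℂ) * ζ) ζ 1 := by
      have h1 : HasDerivAt (fun w : ℂ => w * ζ) ζ (((1:ℝ):ℂ)) := by
        simpa using (hasDerivAt_id (((1:ℝ):ℂ))).mul_const ζ
      exact h1.comp_ofReal
    have hfd : HasDerivAt f d (((1:ℝ) : ℂ) * ζ) := by simpa using hf
    have hD := hasDerivAt_normSq_comp (hasDerivAt_comp_real (u := fun r : ℝ => (r:ℂ) * ζ) (t := 1) hfd hu)
    have hD' : HasDerivAt (fun r : ℝ => Complex.normSq (f ((r : ℂ) * ζ)))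
        (2 * (conj (f ζ) * (ζ * d)).re) 1 := by
      convert hD using 2 <;> simp
    have hle : ∀ r : ℝ, 0 ≤ r → r < 1 →
        Complex.normSq (f ((r : ℂ) * ζ)) ≤ Complex.normSq (f (((1:ℝ) : ℂ) * ζ)) := by
      intro r hr0 hr1
      have hn : ‖(r : ℂ) * ζ‖ < 1 := by
        rw [norm_mul, hζ, mul_one, Complex.norm_real, Real.norm_eq_abs, _root_.abs_of_nonneg hr0]
        exact hr1
      have h1 : Complex.normSq (f ((r:ℂ) * ζ)) ≤ 1 := by
        rw [Complex.normSq_eq_norm_sq]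
        have := hin _ hn
        nlinarith [norm_nonneg (f ((r:ℂ)*ζ))]
      have h2 : Complex.normSq (f (((1:ℝ):ℂ) * ζ)) = 1 := by
        rw [Complex.normSq_eq_norm_sq]
        simp [hbd ζ hζ]
      rw [h2]; exact h1
    have := deriv_nonneg_side hD' hle
    linarith

lemma blaschke_factor_den_ne {α z : ℂ} (hα : ‖α‖ < 1) (hz : ‖z‖ ≤ 1) :
    1 - conj α * z ≠ 0 := by
  intro h
  have h1 : ‖conj α * z‖ < 1 := by
    rw [norm_mul, RCLike.norm_conj]
    nlinarith [norm_nonneg α, norm_nonneg z]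
  have h2 : (1:ℂ) = conj α * z := by
    have h3 := sub_eq_zero.mp h; exact h3
  rw [← h2] at h1; simp at h1

lemma blaschke_factor_le {α z : ℂ} (hα : ‖α‖ < 1) (hz : ‖z‖ ≤ 1) :
    ‖(z - α) / (1 - conj α * z)‖ ≤ 1 := by
  rw [norm_div, div_le_one (norm_pos_iff.mpr (blaschke_factor_den_ne hα hz))]
  have h1 : Complex.normSq (z - α) ≤ Complex.normSq (1 - conj α * z) := by
    have ha : Complex.normSq α < 1 := by
      rw [Complex.normSq_eq_norm_sq]; nlinarith [norm_nonneg α]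
    have hzz : Complex.normSq z ≤ 1 := by
      rw [Complex.normSq_eq_norm_sq]; nlinarith [norm_nonneg z]
    simp only [Complex.normSq_apply, Complex.sub_re, Complex.sub_im, Complex.mul_re,
      Complex.mul_im, Complex.one_re, Complex.one_im, Complex.conj_re, Complex.conj_im,
      Complex.normSq_apply] at *
    nlinarith
  have := Real.sqrt_le_sqrt h1
  rwa [← Complex.norm_def, ← Complex.norm_def] at this

lemma blaschke_factor_eq {α z : ℂ} (hα : ‖α‖ < 1) (hz : ‖z‖ = 1) :
    ‖(z - α) / (1 - conj α * z)‖ = 1 := by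
  have hden : 1 - conj α * z = z * conj (z - α) := by
    have h1 : z * conj z = 1 := by
      rw [Complex.mul_conj]
      norm_cast
      rw [Complex.normSq_eq_norm_sq, hz]; norm_num
    calc 1 - conj α * z = z * conj z - conj α * z := by rw [h1]
    _ = z * conj (z - α) := by rw [map_sub]; ring
  have hne : z - α ≠ 0 := by
    intro h
    have : z = α := by linear_combination h
    rw [this] at hz; rw [hz] at hα; linarith
  rw [norm_div, hden, norm_mul, hz, RCLike.norm_conj, one_mul]
  exact div_self (norm_ne_zero_iff.mpr hne)

lemma blaschke_props {υ : ℂ → ℂ} (h : IsFiniteBlaschke υ) :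
    (∀ z : ℂ, ‖z‖ ≤ 1 → ‖υ z‖ ≤ 1) ∧ (∀ z : ℂ, ‖z‖ = 1 → ‖υ z‖ = 1) ∧
      (∀ z : ℂ, ‖z‖ ≤ 1 → DifferentiableAt ℂ υ z) := by
  obtain ⟨n, c, α, hc, hα, hfor⟩ := h
  have hfun : υ = fun z => c * ∏ j, (z - α j) / (1 - conj (α j) * z) := funext hfor
  refine ⟨?_, ?_, ?_⟩
  · intro z hz
    rw [hfun, norm_mul, hc, one_mul]
    calc ‖∏ j, (z - α j) / (1 - conj (α j) * z)‖
        = ∏ j, ‖(z - α j) / (1 - conj (α j) * z)‖ := norm_prod _ _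
      _ ≤ ∏ j : Fin n, (1:ℝ) := by
          apply Finset.prod_le_prod (fun j _ => norm_nonneg _)
          exact fun j _ => blaschke_factor_le (hα j) hz
      _ = 1 := by simp
  · intro z hz
    rw [hfun, norm_mul, hc, one_mul, norm_prod]
    rw [Finset.prod_eq_one]
    exact fun j _ => blaschke_factor_eq (hα j) hz
  · intro z hz
    rw [hfun]
    apply DifferentiableAt.const_mul
    apply DifferentiableAt.fun_finsetProd
    intro j _
    apply DifferentiableAt.div
    · exact differentiableAt_id.sub_const _
    · exact (differentiableAt_const _).sub ((differentiableAt_const _).mul differentiableAt_id)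
    · exact blaschke_factor_den_ne (hα j) hz

lemma rat_hasDerivAt {P Q : Polynomial ℂ} {z : ℂ} (hQ : Q.eval z ≠ 0) :
    HasDerivAt (fun w => P.eval w / Q.eval w)
      ((Polynomial.eval z (Polynomial.derivative P) * Q.eval z
        - P.eval z * Polynomial.eval z (Polynomial.derivative Q)) / Q.eval z ^ 2) z :=
  (P.hasDerivAt z).div (Q.hasDerivAt z) hQ

lemma rat_diffOn {P Q : Polynomial ℂ} (hQ : ∀ z : ℂ, ‖z‖ ≤ 1 → Q.eval z ≠ 0) :
    DifferentiableOn ℂ (fun w => P.eval w / Q.eval w) (closedBall 0 1) := by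
  intro z hz
  exact ((rat_hasDerivAt (hQ z (mem_closedBall_zero_iff.mp hz))).differentiableAt).differentiableWithinAt

lemma eq_one_of_re_eq_one {w : ℂ} (h1 : ‖w‖ ≤ 1) (h2 : w.re = 1) : w = 1 := by
  have hsq : Complex.normSq w ≤ 1 := by
    rw [Complex.normSq_eq_norm_sq]; nlinarith [norm_nonneg w]
  rw [Complex.normSq_apply, h2] at hsq
  have him : w.im = 0 := by nlinarith
  exact Complex.ext (by simp [h2]) (by simp [him])

/-- Boundary rigidity: a rational function bounded by 1 on the closed disc whose
derivative vanishes at a boundary point of modulus-one value is constant. -/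
lemma rigidity {f : ℂ → ℂ} {P Q : Polynomial ℂ} (hQ : ∀ z : ℂ, ‖z‖ ≤ 1 → Q.eval z ≠ 0)
    (hfr : ∀ z, f z = P.eval z / Q.eval z)
    {ζ c : ℂ} (hζ : ‖ζ‖ = 1) (hc : ‖c‖ = 1)
    (hval : f ζ = c) (hder : HasDerivAt f 0 ζ)
    (hin : ∀ z : ℂ, ‖z‖ < 1 → ‖f z‖ ≤ 1) (hbd : ∀ lam : ℂ, ‖lam‖ = 1 → ‖f lam‖ ≤ 1) :
    ∀ z : ℂ, ‖z‖ ≤ 1 → f z = c := by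
  have hQζ : Q.eval ζ ≠ 0 := hQ ζ hζ.le
  have hζ0 : ζ ≠ 0 := by intro h; rw [h] at hζ; simp at hζ
  have hc0 : c ≠ 0 := by intro h; rw [h] at hc; simp at hc
  have hcc : c * conj c = 1 := by
    rw [Complex.mul_conj]; norm_cast
    rw [Complex.normSq_eq_norm_sq, hc]; norm_num
  have hζζ : ζ * conj ζ = 1 := by
    rw [Complex.mul_conj]; norm_cast
    rw [Complex.normSq_eq_norm_sq, hζ]; norm_num
  have hPζ : P.eval ζ = c * Q.eval ζ := by
    have h1 := (hfr ζ).symm.trans hval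
    field_simp at h1; linear_combination h1
  -- derivative numerator vanishes
  have hnum : Polynomial.eval ζ (Polynomial.derivative P) * Q.eval ζ
      - P.eval ζ * Polynomial.eval ζ (Polynomial.derivative Q) = 0 := by
    have h1 : HasDerivAt (fun w => P.eval w / Q.eval w) 0 ζ := by
      have : f = fun w => P.eval w / Q.eval w := funext hfr
      rwa [this] at hder
    have h2 := (rat_hasDerivAt (P := P) hQζ).unique h1
    have h3 : Q.eval ζ ^ 2 ≠ 0 := pow_ne_zero _ hQζ
    field_simp at h2
    linear_combination h2
  -- the polynomial N with a double root at ζ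
  set N : Polynomial ℂ := Q - Polynomial.C (conj c) * P with hNdef
  have hNζ : N.eval ζ = 0 := by
    simp only [hNdef, Polynomial.eval_sub, Polynomial.eval_mul, Polynomial.eval_C]
    rw [hPζ]; linear_combination (-(Q.eval ζ)) * hcc
  have hP'ζ : Polynomial.eval ζ (Polynomial.derivative P)
      = c * Polynomial.eval ζ (Polynomial.derivative Q) := by
    have h1 : Polynomial.eval ζ (Polynomial.derivative P) * Q.eval ζ
        = (c * Polynomial.eval ζ (Polynomial.derivative Q)) * Q.eval ζ := by
      linear_combination hnum + Polynomial.eval ζ (Polynomial.derivative Q) * hPζ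
    exact mul_right_cancel₀ hQζ h1
  have hN'ζ : Polynomial.eval ζ (Polynomial.derivative N) = 0 := by
    simp only [hNdef, Polynomial.derivative_sub, Polynomial.derivative_C_mul,
      Polynomial.eval_sub, Polynomial.eval_mul, Polynomial.eval_C]
    rw [hP'ζ]
    linear_combination (-(Polynomial.eval ζ (Polynomial.derivative Q))) * hcc
  obtain ⟨M₁, hM₁⟩ := Polynomial.dvd_iff_isRoot.mpr hNζ
  have hM₁ζ : M₁.eval ζ = 0 := by
    have h1 := congrArg (Polynomial.eval ζ) (congrArg Polynomial.derivative hM₁)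
    simp only [Polynomial.derivative_mul, Polynomial.derivative_sub, Polynomial.derivative_X,
      Polynomial.derivative_C, sub_zero, Polynomial.eval_add, Polynomial.eval_mul,
      Polynomial.eval_sub, Polynomial.eval_X, Polynomial.eval_C, Polynomial.eval_one,
      one_mul, sub_self, zero_mul, add_zero] at h1
    rw [hN'ζ] at h1; linear_combination -h1
  obtain ⟨M, hM⟩ := Polynomial.dvd_iff_isRoot.mpr hM₁ζ
  have hNM : N = (Polynomial.X - Polynomial.C ζ) ^ 2 * M := by rw [hM₁, hM]; ring
  -- the auxiliary functions k and m
  set kf : ℂ → ℂ := fun z => M.eval z / Q.eval z with hkf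
  set mf : ℂ → ℂ := fun z => z * ζ * kf z with hmf
  have hkey : ∀ z : ℂ, Q.eval z ≠ 0 → 1 - conj c * f z = (z - ζ) ^ 2 * kf z := by
    intro z hQz
    have h1 := congrArg (Polynomial.eval z) hNM
    simp only [hNdef, Polynomial.eval_sub, Polynomial.eval_mul, Polynomial.eval_pow,
      Polynomial.eval_X, Polynomial.eval_C] at h1
    rw [hfr z, hkf]
    field_simp
    linear_combination h1
  have hmf_diff : DifferentiableOn ℂ mf (closedBall 0 1) := by
    apply DifferentiableOn.mul
    · exact (differentiable_id.mul_const ζ).differentiableOn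
    · exact rat_diffOn hQ
  -- boundary bound away from ζ
  have hbd2 : ∀ lam : ℂ, ‖lam‖ = 1 → lam ≠ ζ → (mf lam).re ≤ 0 := by
    intro lam h1 hne
    have hQl := hQ lam h1.le
    have hll : lam * conj lam = 1 := by
      rw [Complex.mul_conj]; norm_cast
      rw [Complex.normSq_eq_norm_sq, h1]; norm_num
    have e1 := hkey lam hQl
    have hre : 0 ≤ (1 - conj c * f lam).re := by
      have h2 : (conj c * f lam).re ≤ 1 := by
        have h3 := Complex.re_le_norm (conj c * f lam)
        have h4 : ‖conj c * f lam‖ ≤ 1 := by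
          rw [norm_mul, RCLike.norm_conj, hc, one_mul]; exact hbd lam h1
        linarith
      simp only [Complex.sub_re, Complex.one_re]; linarith
    have hsq : (lam - ζ) ^ 2
        = -(lam * ζ) * ((Complex.normSq (lam - ζ) : ℝ) : ℂ) := by
      rw [← Complex.mul_conj]
      have hcz : conj (lam - ζ) = conj lam - conj ζ := map_sub _ _ _
      rw [hcz]
      linear_combination (ζ * (lam - ζ)) * hll - (lam * (lam - ζ)) * hζζ
    rw [hsq] at e1
    have e2 : 1 - conj c * f lam
        = ((Complex.normSq (lam - ζ) : ℝ) : ℂ) * (-(mf lam)) := by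
      rw [e1, hmf]; ring
    have e3 : (1 - conj c * f lam).re = Complex.normSq (lam - ζ) * (-(mf lam)).re := by
      rw [e2, Complex.re_ofReal_mul]
    have hpos : 0 < Complex.normSq (lam - ζ) := by
      rw [Complex.normSq_pos]; exact sub_ne_zero.mpr hne
    have := e3 ▸ hre
    simp only [Complex.neg_re] at this
    nlinarith
  -- boundary bound at ζ by continuity
  have hmfζ : (mf ζ).re ≤ 0 := by
    have hcont : ContinuousAt mf ζ := by
      apply ContinuousAt.mul
      · exact (continuous_id.mul continuous_const).continuousAt
      · exact ((rat_hasDerivAt (P := M) hQζ).differentiableAt).continuousAt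
    have hcurve : Tendsto (fun t : ℝ => ζ * Complex.exp (Complex.I * t)) (nhdsWithin 0 (Set.Ioi 0))
        (nhds ζ) := by
      have h2 : Continuous (fun t : ℝ => ζ * Complex.exp (Complex.I * t)) :=
        continuous_const.mul (Complex.continuous_exp.comp (continuous_const.mul Complex.continuous_ofReal))
      have h3 := h2.continuousAt (x := 0)
      rw [ContinuousAt] at h3
      simp only [Complex.ofReal_zero, mul_zero, Complex.exp_zero, mul_one] at h3
      exact h3.mono_left nhdsWithin_le_nhds
    have hT : Tendsto (fun t : ℝ => (mf (ζ * Complex.exp (Complex.I * t))).re)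
        (nhdsWithin 0 (Set.Ioi 0)) (nhds ((mf ζ).re)) := by
      have h4 : ContinuousAt (fun z => (mf z).re) ζ := Complex.continuous_re.continuousAt.comp hcont
      exact h4.tendsto.comp hcurve
    refine le_of_tendsto hT ?_
    filter_upwards [Ioo_mem_nhdsGT_of_mem (Set.left_mem_Ico.mpr one_pos)] with t ht
    have hnrm : ‖ζ * Complex.exp (Complex.I * t)‖ = 1 := by
      rw [norm_mul, hζ, Complex.norm_exp]; simp
    have hne : ζ * Complex.exp (Complex.I * t) ≠ ζ := by
      intro heq
      have h5 : Complex.exp (Complex.I * t) = 1 :=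
        mul_left_cancel₀ hζ0 (heq.trans (mul_one ζ).symm)
      rw [Complex.exp_eq_one_iff] at h5
      obtain ⟨n, hn⟩ := h5
      have hn' : t = 2 * Real.pi * n := by
        have h6 := congrArg Complex.im hn
        simp at h6; linarith
      rcases Int.lt_or_le n 1 with h7 | h7
      · have h8 : (n:ℝ) ≤ 0 := by exact_mod_cast Int.lt_add_one_iff.mp h7
        nlinarith [ht.1, Real.pi_pos]
      · have h8 : (1:ℝ) ≤ (n:ℝ) := by exact_mod_cast h7
        nlinarith [ht.2, Real.pi_gt_three]
    exact hbd2 _ hnrm hne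
  have hmax : ∀ z : ℂ, ‖z‖ ≤ 1 → (mf z).re ≤ 0 := by
    intro z hz
    refine re_nonpos_of_boundary hmf_diff ?_ hz
    intro lam hlam
    by_cases hl : lam = ζ
    · rw [hl]; exact hmfζ
    · exact hbd2 lam hlam hl
  have hrad : ∀ r : ℝ, 0 < r → r < 1 → conj c * f ((r:ℂ) * ζ) = 1 := by
    intro r h0 h1
    have hzn : ‖(r:ℂ) * ζ‖ < 1 := by
      rw [norm_mul, hζ, mul_one, Complex.norm_real, Real.norm_eq_abs,
        _root_.abs_of_nonneg h0.le]
      exact h1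
    have hQz : Q.eval ((r:ℂ)*ζ) ≠ 0 := hQ _ hzn.le
    have e1 := hkey _ hQz
    have h4 : ‖conj c * f ((r:ℂ)*ζ)‖ ≤ 1 := by
      rw [norm_mul, RCLike.norm_conj, hc, one_mul]; exact hin _ hzn
    have hre0 : 0 ≤ (1 - conj c * f ((r:ℂ)*ζ)).re := by
      have h3 := Complex.re_le_norm (conj c * f ((r:ℂ)*ζ))
      simp only [Complex.sub_re, Complex.one_re]; linarith
    have hsq : ((r:ℂ)*ζ - ζ)^2 = (((r-1)^2 : ℝ) : ℂ) * ζ^2 := by push_cast; ring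
    have e2 : (1 - conj c * f ((r:ℂ)*ζ)).re = (r-1)^2 * (ζ^2 * kf ((r:ℂ)*ζ)).re := by
      rw [e1, hsq, mul_assoc, Complex.re_ofReal_mul]
    have e3 : (mf ((r:ℂ)*ζ)).re = r * (ζ^2 * kf ((r:ℂ)*ζ)).re := by
      have h5 : mf ((r:ℂ)*ζ) = ((r:ℝ):ℂ) * (ζ^2 * kf ((r:ℂ)*ζ)) := by rw [hmf]; ring
      rw [h5, Complex.re_ofReal_mul]
    have h5 := hmax _ hzn.le
    rw [e3] at h5
    rw [e2] at hre0
    have h6 : (ζ^2 * kf ((r:ℂ)*ζ)).re = 0 := by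
      have hne1 : r - 1 < 0 := by linarith
      have hp : 0 < (r-1)^2 := by nlinarith
      nlinarith
    have h7 : (conj c * f ((r:ℂ)*ζ)).re = 1 := by
      have h8 : (1 - conj c * f ((r:ℂ)*ζ)).re = 0 := by rw [e2, h6]; ring
      simp only [Complex.sub_re, Complex.one_re] at h8; linarith
    exact eq_one_of_re_eq_one h4 h7
  have hroots : ∀ r : ℝ, 0 < r → r < 1 → N.eval ((r:ℂ)*ζ) = 0 := by
    intro r h0 h1
    have h2 := hrad r h0 h1
    have hzn : ‖(r:ℂ) * ζ‖ ≤ 1 := by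
      rw [norm_mul, hζ, mul_one, Complex.norm_real, Real.norm_eq_abs,
        _root_.abs_of_nonneg h0.le]
      exact h1.le
    have hQz : Q.eval ((r:ℂ)*ζ) ≠ 0 := hQ _ hzn
    have hfz : P.eval ((r:ℂ)*ζ) = f ((r:ℂ)*ζ) * Q.eval ((r:ℂ)*ζ) := by
      rw [hfr]; field_simp
    simp only [hNdef, Polynomial.eval_sub, Polynomial.eval_mul, Polynomial.eval_C]
    rw [hfz]
    linear_combination (-(Polynomial.eval ((r:ℂ)*ζ) Q)) * h2
  have hN0 : N = 0 := by
    apply Polynomial.eq_zero_of_infinite_isRoot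
    have himg : ((fun r : ℝ => (r:ℂ)*ζ) '' (Set.Ioo 0 1)).Infinite := by
      apply Set.Infinite.image
      · intro a _ b _ hab
        have h10 : ((a:ℂ)) = ((b:ℂ)) := mul_right_cancel₀ hζ0 hab
        exact_mod_cast h10
      · exact Set.Ioo_infinite zero_lt_one
    apply himg.mono
    rintro _ ⟨r, hr, rfl⟩
    exact hroots r hr.1 hr.2
  intro z hz
  have hQz := hQ z hz
  have hPQ : Q.eval z = conj c * P.eval z := by
    have h9 := congrArg (Polynomial.eval z) hN0
    simp only [hNdef, Polynomial.eval_sub, Polynomial.eval_mul, Polynomial.eval_C,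
      Polynomial.eval_zero] at h9
    linear_combination h9
  have hPz : P.eval z ≠ 0 := by
    intro h; rw [h, mul_zero] at hPQ; exact hQz hPQ
  rw [hfr, hPQ]
  rw [div_eq_iff (by rw [hPQ] at hQz; exact hQz)]
  linear_combination (Polynomial.eval z P) * hcc.symm

lemma const_of_real_boundary {f : ℂ → ℂ} {P Q : Polynomial ℂ}
    (hQ : ∀ z : ℂ, ‖z‖ ≤ 1 → Q.eval z ≠ 0)
    (hfr : ∀ z, f z = P.eval z / Q.eval z)
    (hreal : ∀ lam : ℂ, ‖lam‖ = 1 → conj (f lam) = f lam) :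
    ∃ v : ℂ, ∀ z : ℂ, ‖z‖ ≤ 1 → f z = v := by
  have hfun : f = fun w => P.eval w / Q.eval w := funext hfr
  have hdiff : DifferentiableOn ℂ f (closedBall 0 1) := by
    rw [hfun]; exact rat_diffOn hQ
  have him0 : ∀ lam : ℂ, ‖lam‖ = 1 → (f lam).im = 0 := by
    intro lam h
    have h2 := congrArg Complex.im (hreal lam h)
    simp only [Complex.conj_im] at h2; linarith
  have hball : ∀ z : ℂ, ‖z‖ ≤ 1 → (f z).im = 0 := by
    intro z hz
    have hp : ((Complex.I * f z)).re ≤ 0 := by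
      apply re_nonpos_of_boundary ((differentiable_const Complex.I).differentiableOn.mul hdiff)
        ?_ hz
      intro lam hlam
      simp [Complex.mul_re, Complex.I_re, Complex.I_im, him0 lam hlam]
    have hm : ((-Complex.I * f z)).re ≤ 0 := by
      apply re_nonpos_of_boundary (((differentiable_const (-Complex.I)).differentiableOn).mul hdiff)
        ?_ hz
      intro lam hlam
      simp [Complex.mul_re, Complex.I_re, Complex.I_im, him0 lam hlam]
    simp only [Complex.mul_re, Complex.I_re, Complex.I_im, Complex.neg_re, Complex.neg_im,
      neg_mul, zero_mul, one_mul, zero_sub, neg_neg, neg_zero] at hp hm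
    linarith
  have hana : AnalyticOnNhd ℂ f (ball 0 1) :=
    (hdiff.mono ball_subset_closedBall).analyticOnNhd isOpen_ball
  rcases hana.is_constant_or_isOpen (convex_ball (0:ℂ) 1).isPreconnected with ⟨v, hv⟩ | hopen
  · refine ⟨v, ?_⟩
    have hroots : ∀ r : ℝ, 0 < r → r < 1 → (P - Polynomial.C v * Q).eval ((r:ℂ)) = 0 := by
      intro r h0 h1
      have hz : ‖((r:ℝ):ℂ)‖ < 1 := by
        rw [Complex.norm_real, Real.norm_eq_abs, _root_.abs_of_nonneg h0.le]; exact h1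
      have hfv : f ((r:ℝ):ℂ) = v := hv _ (mem_ball_zero_iff.mpr hz)
      have hQz : Q.eval ((r:ℝ):ℂ) ≠ 0 := hQ _ hz.le
      rw [hfr] at hfv
      simp only [Polynomial.eval_sub, Polynomial.eval_mul, Polynomial.eval_C]
      rw [div_eq_iff hQz] at hfv
      linear_combination hfv
    have hN0 : P - Polynomial.C v * Q = 0 := by
      apply Polynomial.eq_zero_of_infinite_isRoot
      have himg : ((fun r : ℝ => ((r:ℝ):ℂ)) '' (Set.Ioo 0 1)).Infinite := by
        apply Set.Infinite.image
        · intro a _ b _ hab; simpa using hab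
        · exact Set.Ioo_infinite zero_lt_one
      apply himg.mono
      rintro _ ⟨r, hr, rfl⟩
      exact hroots r hr.1 hr.2
    intro z hz
    have hQz := hQ z hz
    have h2 := congrArg (Polynomial.eval z) hN0
    simp only [Polynomial.eval_sub, Polynomial.eval_mul, Polynomial.eval_C,
      Polynomial.eval_zero] at h2
    rw [hfr, div_eq_iff hQz]
    linear_combination h2
  · exfalso
    have hop := hopen (ball 0 1) subset_rfl isOpen_ball
    have hmem : f 0 ∈ f '' (ball 0 1) := ⟨0, by simp, rfl⟩
    obtain ⟨ε, hε, hsub⟩ := Metric.isOpen_iff.mp hop _ hmem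
    have hmem2 : f 0 + Complex.I * (ε/2 : ℝ) ∈ Metric.ball (f 0) ε := by
      rw [mem_ball_iff_norm]
      simp only [add_sub_cancel_left]
      rw [norm_mul, Complex.norm_I, one_mul, Complex.norm_real, Real.norm_eq_abs,
        _root_.abs_of_nonneg (by linarith : (0:ℝ) ≤ ε/2)]
      linarith
    obtain ⟨w, hw, hfw⟩ := hsub hmem2
    have h3 : (f w).im = 0 := hball w (mem_ball_zero_iff.mp hw).le
    have h4 := congrArg Complex.im hfw
    simp only [Complex.add_im, Complex.mul_im, Complex.I_re, Complex.I_im,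
      Complex.ofReal_re, Complex.ofReal_im] at h4
    have h5 : (f 0).im = 0 := hball 0 (by simp)
    rw [h3, h5] at h4
    simp at h4
    linarith

/-- In the situation of a royal node ζ ∈ 𝕋 of a nonconstant
rational Γ-inner h = (s,p) with h(ζ) = (2·conj(ω), conj(ω)²), ω ∈ 𝕋, and a
finite Blaschke product υ with υ(ζ) = ω, it cannot happen that the derivatives
of both 2υp − s and 2 − υs vanish at ζ; that is, Φ∘(υ,h) has at most one
cancellation at ζ. -/
theorem at_most_one_cancellation
    (s p υ : ℂ → ℂ) (h : IsRationalGammaInner s p)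
    (hnc : ¬ ∃ c : ℂ × ℂ, ∀ z : ℂ, ‖z‖ ≤ 1 → (s z, p z) = c)
    (hυ : IsFiniteBlaschke υ)
    (ζ ω : ℂ) (hζ : ‖ζ‖ = 1) (hω : ‖ω‖ = 1)
    (hsv : s ζ = 2 * conj ω) (hpv : p ζ = (conj ω) ^ 2) (hυv : υ ζ = ω) :
    ¬ (deriv (fun z => 2 * υ z * p z - s z) ζ = 0 ∧
        deriv (fun z => 2 - υ z * s z) ζ = 0) := by
  rintro ⟨hc1, hc2⟩
  obtain ⟨⟨hsrat, hprat, hmap⟩, hbnd⟩ := h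
  obtain ⟨Ps, Qs, hQs, hs⟩ := hsrat
  obtain ⟨Pp, Qp, hQp, hp⟩ := hprat
  obtain ⟨hυle, hυeq, hυdiff⟩ := blaschke_props hυ
  have hω0 : ω ≠ 0 := by intro h0; rw [h0] at hω; simp at hω
  have hζ0 : ζ ≠ 0 := by intro h0; rw [h0] at hζ; simp at hζ
  have hωω : ω * conj ω = 1 := by
    rw [Complex.mul_conj]; norm_cast
    rw [Complex.normSq_eq_norm_sq, hω]; norm_num
  -- differentiability of s, p, υ at ζ
  have hsfun : s = fun z => Ps.eval z / Qs.eval z := funext hs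
  have hpfun : p = fun z => Pp.eval z / Qp.eval z := funext hp
  have hsdiff : DifferentiableAt ℂ s ζ := by
    rw [hsfun]; exact (rat_hasDerivAt (hQs ζ hζ.le)).differentiableAt
  have hpdiff : DifferentiableAt ℂ p ζ := by
    rw [hpfun]; exact (rat_hasDerivAt (hQp ζ hζ.le)).differentiableAt
  set ds := deriv s ζ with hdsdef
  set dp := deriv p ζ with hdpdef
  set dυ := deriv υ ζ with hdυdef
  have hds : HasDerivAt s ds ζ := hsdiff.hasDerivAt
  have hdp : HasDerivAt p dp ζ := hpdiff.hasDerivAt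
  have hdυ : HasDerivAt υ dυ ζ := (hυdiff ζ hζ.le).hasDerivAt
  -- the two vanishing derivatives
  have hF : HasDerivAt (fun z => 2 * υ z * p z - s z)
      (2 * dυ * p ζ + 2 * υ ζ * dp - ds) ζ := ((hdυ.const_mul 2).mul hdp).sub hds
  have hG : HasDerivAt (fun z => 2 - υ z * s z)
      (0 - (dυ * s ζ + υ ζ * ds)) ζ := (hasDerivAt_const ζ 2).sub (hdυ.mul hds)
  have e1 : 2 * dυ * p ζ + 2 * υ ζ * dp - ds = 0 := hF.deriv.symm.trans hc1
  have e2 : 0 - (dυ * s ζ + υ ζ * ds) = 0 := hG.deriv.symm.trans hc2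
  rw [hpv, hυv] at e1
  rw [hsv, hυv] at e2
  -- solve the linear relations
  have h3 : dυ * (2 * conj ω) + ω * ds = 0 := by linear_combination -e2
  have hdυ_eq : dυ = -(ω^2 * ds)/2 := by
    linear_combination (ω/2) * h3 + (-dυ) * hωω
  have e1' : 2 * (-(ω^2 * ds)/2) * (conj ω)^2 + 2 * ω * dp - ds = 0 := by
    rw [← hdυ_eq]; exact e1
  have hds_eq : ds = ω * dp := by
    linear_combination (-1/2 : ℂ) * e1' + (-(ds/2) * (ω * conj ω + 1)) * hωω
  have hdυ2 : dυ = -(ω^3 * dp)/2 := by rw [hdυ_eq, hds_eq]; ring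
  -- inner bounds for p
  have hpin : ∀ z : ℂ, ‖z‖ < 1 → ‖p z‖ ≤ 1 := by
    intro z hz
    obtain ⟨a, b, ha, hb, hab⟩ := hmap z hz
    have h4 : p z = a * b := by
      have := congrArg Prod.snd hab; simpa using this
    rw [h4, norm_mul]
    nlinarith [norm_nonneg a, norm_nonneg b]
  have hpbd : ∀ lam : ℂ, ‖lam‖ = 1 → ‖p lam‖ = 1 := fun lam hl => (hbnd lam hl).1
  -- phasar derivatives
  have hAp := phasar hζ hdp hpin hpbd
  have hAυ := phasar hζ hdυ (fun z hz => hυle z hz.le) hυeq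
  -- relation between the two phasar derivatives
  have hconj2 : conj ((conj ω)^2) = ω^2 := by rw [map_pow, Complex.conj_conj]
  have hrel : 2 * (conj (υ ζ) * (ζ * dυ)) = -(conj (p ζ) * (ζ * dp)) := by
    rw [hυv, hpv, hdυ2, hconj2]
    linear_combination (-(ζ * ω^2 * dp)) * hωω
  have hrelre := congrArg Complex.re hrel
  have hrelim := congrArg Complex.im hrel
  simp only [Complex.mul_re, Complex.mul_im, Complex.neg_re, Complex.neg_im] at hrelre hrelim
  have hre2 : (2 : ℂ).re = 2 := rfl
  -- deduce Ap = 0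
  have hAp0 : conj (p ζ) * (ζ * dp) = 0 := by
    apply Complex.ext
    · have h6 : ((2:ℂ) * (conj (υ ζ) * (ζ * dυ))).re = 2 * (conj (υ ζ) * (ζ * dυ)).re := by
        simp [Complex.mul_re]
      have h7 : ((2:ℂ) * (conj (υ ζ) * (ζ * dυ))).re = -((conj (p ζ) * (ζ * dp)).re) := by
        rw [hrel]; simp
      rw [h6] at h7
      simp only [Complex.zero_re]
      linarith [hAp.2, hAυ.2]
    · simp only [Complex.zero_im]; exact hAp.1
  have hdp0 : dp = 0 := by
    have h8 : conj (p ζ) ≠ 0 := by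
      intro h9
      have := congrArg (‖·‖) h9
      rw [RCLike.norm_conj, hpbd ζ hζ] at this
      simp at this
    rcases mul_eq_zero.mp hAp0 with h9 | h9
    · exact absurd h9 h8
    · rcases mul_eq_zero.mp h9 with h10 | h10
      · exact absurd h10 hζ0
      · exact h10
  -- rigidity: p is constant
  have hc2' : ‖(conj ω)^2‖ = 1 := by
    rw [norm_pow, RCLike.norm_conj, hω]; norm_num
  have hdp' : HasDerivAt p 0 ζ := by rw [← hdp0]; exact hdp
  have hpall : ∀ z : ℂ, ‖z‖ ≤ 1 → p z = (conj ω)^2 :=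
    rigidity hQp hp hζ hc2' hpv hdp' hpin (fun lam hl => (hpbd lam hl).le)
  -- s is constant
  have hfr2 : ∀ z : ℂ, ω * s z = (Polynomial.C ω * Ps).eval z / Qs.eval z := by
    intro z
    rw [Polynomial.eval_mul, Polynomial.eval_C, hs z, mul_div_assoc]
  have hreal2 : ∀ lam : ℂ, ‖lam‖ = 1 → conj (ω * s lam) = ω * s lam := by
    intro lam hl
    have hb := (hbnd lam hl).2.2
    rw [hpall lam hl.le] at hb
    have h5 : conj (s lam) = ω^2 * s lam := by
      linear_combination (-(ω^2)) * hb + (-(conj (s lam)) * (ω * conj ω + 1)) * hωω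
    rw [map_mul, h5]
    linear_combination (s lam * ω) * hωω
  obtain ⟨v, hv⟩ := const_of_real_boundary hQs hfr2 hreal2
  apply hnc
  refine ⟨(conj ω * v, (conj ω)^2), fun z hz => ?_⟩
  have hsz : s z = conj ω * v := by
    linear_combination (conj ω) * (hv z hz) + (-(s z)) * hωω
  rw [hsz, hpall z hz]
end
end

section
/- Let h = (s, p) be an analytic map from 𝔻 to the closed symmetrized bidisc Γ, and suppose there exists an inner function m such that q := (2mp − s)/(2 − ms) is inner and mq is identically 1. Then h is constant, equal to (x\bar{ω}, \bar{ω}²) for some ω ∈ 𝕋 and x ∈ [−2, 2]; in particular h is Γ-inner. -/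
open Complex Metric Set MeasureTheory Filter ComplexConjugate

noncomputable section

/-- Auxiliary: for a unimodular complex number, `conj a * a = 1`. -/
lemma conj_mul_self_one {a : ℂ} (h : ‖a‖ = 1) : conj a * a = 1 := by
  rw [mul_comm, Complex.mul_conj]
  norm_cast
  simp [Complex.normSq_eq_norm_sq, h]

/-- Auxiliary: radial points belong to the unit ball. -/
lemma radial_mem_ball (θ : ℝ) (r : ℝ) (hr : r ∈ Set.Ioo (0:ℝ) 1) :
    ((r:ℂ) * Complex.exp (Complex.I * θ)) ∈ ball (0:ℂ) 1 := by
  rw [mem_ball_zero_iff, norm_mul, Complex.norm_exp]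
  simp only [Complex.mul_re, Complex.I_re, Complex.I_im, Complex.ofReal_re, Complex.ofReal_im]
  norm_num
  exact abs_lt.mpr ⟨by linarith [hr.1], hr.2⟩

/-- Let h = (s,p) be analytic from 𝔻 into Γ and suppose there is
an inner function m such that q = (2mp − s)/(2 − ms) is inner and mq ≡ 1 on 𝔻.
Then h is constant, equal to (x·conj(ω), conj(ω)²) for some ω ∈ 𝕋 and
x ∈ [−2,2]; in particular h is Γ-inner. -/
theorem constant_case_mq_eq_one
    (s p m q : ℂ → ℂ)
    (hs : DifferentiableOn ℂ s (ball (0:ℂ) 1))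
    (hp : DifferentiableOn ℂ p (ball (0:ℂ) 1))
    (hmaps : ∀ z ∈ ball (0:ℂ) 1, (s z, p z) ∈ GammaSet)
    (hm : IsInner m) (hq : IsInner q)
    (hqdef : ∀ z ∈ ball (0:ℂ) 1, (2 - m z * s z) * q z = 2 * m z * p z - s z)
    (hmq : ∀ z ∈ ball (0:ℂ) 1, m z * q z = 1) :
    (∃ (ω : ℂ) (x : ℝ), ‖ω‖ = 1 ∧ x ∈ Set.Icc (-2:ℝ) 2 ∧
      ∀ z ∈ ball (0:ℂ) 1, s z = (x : ℂ) * conj ω ∧ p z = (conj ω) ^ 2) ∧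
    IsGammaInnerAE s p := by
  have h0 : (0:ℂ) ∈ ball (0:ℂ) 1 := by simp
  set ω := m 0 with hωdef
  -- ω is unimodular
  have hω1 : ‖ω‖ = 1 := by
    have h1 : ‖m 0 * q 0‖ = 1 := by rw [hmq 0 h0]; simp
    rw [norm_mul] at h1
    have hm0 := hm.2.1 0 h0
    have hq0 := hq.2.1 0 h0
    nlinarith [norm_nonneg (m 0), norm_nonneg (q 0)]
  have hωc : ω * conj ω = 1 := by
    rw [mul_comm]; exact conj_mul_self_one hω1
  -- m is constant equal to ω on the ball
  have hmc : ∀ z ∈ ball (0:ℂ) 1, m z = ω := by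
    have hmax : IsMaxOn (norm ∘ m) (ball (0:ℂ) 1) 0 := by
      intro z hz
      simp only [Function.comp]
      calc ‖m z‖ ≤ 1 := hm.2.1 z hz
        _ = ‖m 0‖ := hω1.symm
    exact fun z hz => Complex.eqOn_of_isPreconnected_of_isMaxOn_norm
      (convex_ball (0:ℂ) 1).isPreconnected isOpen_ball hm.1 h0 hmax hz
  -- p is constant equal to (conj ω)^2 on the ball
  have hωne : ω ≠ 0 := by
    intro h; rw [h] at hω1; simp at hω1
  have hpz : ∀ z ∈ ball (0:ℂ) 1, p z = (conj ω) ^ 2 := by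
    intro z hz
    have h1 := hqdef z hz
    rw [hmc z hz] at h1
    have h2 := hmq z hz
    rw [hmc z hz] at h2
    have hqz : q z = conj ω := mul_left_cancel₀ hωne (h2.trans hωc.symm)
    rw [hqz] at h1
    have h3 : conj ω = ω * p z := by linear_combination h1 / 2 + (s z / 2) * hωc
    linear_combination (-(conj ω)) * h3 + (-(p z)) * hωc
  -- Gamma membership gives the boundary relations pointwise on the ball
  have hbd : ∀ z ∈ ball (0:ℂ) 1, s z = conj (s z) * (conj ω) ^ 2 ∧ ‖s z‖ ≤ 2 := by
    intro z hz
    obtain ⟨a, b, ha, hb, hab⟩ := hmaps z hz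
    rw [Prod.ext_iff] at hab
    obtain ⟨hsz, hpzz⟩ := hab
    simp only at hsz hpzz
    have hp1 : ‖p z‖ = 1 := by
      rw [hpz z hz, norm_pow, RCLike.norm_conj, hω1]; norm_num
    have habs : ‖a‖ * ‖b‖ = 1 := by rw [← norm_mul, ← hpzz]; exact hp1
    have ha1 : ‖a‖ = 1 := le_antisymm ha (by nlinarith [norm_nonneg a, norm_nonneg b])
    have hb1 : ‖b‖ = 1 := le_antisymm hb (by nlinarith [norm_nonneg a, norm_nonneg b])
    have hca : conj a * a = 1 := conj_mul_self_one ha1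
    have hcb : conj b * b = 1 := conj_mul_self_one hb1
    constructor
    · rw [← hpz z hz, hpzz, hsz, map_add]
      linear_combination (-b) * hca + (-a) * hcb
    · rw [hsz]
      calc ‖a + b‖ ≤ ‖a‖ + ‖b‖ := norm_add_le a b
        _ ≤ 2 := by rw [ha1, hb1]; norm_num
  -- s z * ω is real-valued on the ball
  have hgreal : ∀ z ∈ ball (0:ℂ) 1, conj (s z * ω) = s z * ω := by
    intro z hz
    have e := (hbd z hz).1
    rw [map_mul]
    linear_combination (-(ω)) * e + (-(conj (s z) * conj ω)) * hωc
  -- the Cayley transform of s·ω has unit modulus, hence s·ω is constant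
  have hden : ∀ z ∈ ball (0:ℂ) 1, s z * ω + I ≠ 0 := by
    intro z hz h
    have hg : s z * ω = -I := by linear_combination h
    have := hgreal z hz
    rw [hg, map_neg, Complex.conj_I] at this
    have : Complex.I = 0 := by linear_combination this / 2
    exact Complex.I_ne_zero this
  have hcayd : DifferentiableOn ℂ (fun z => (s z * ω - I) / (s z * ω + I)) (ball (0:ℂ) 1) :=
    DifferentiableOn.div ((hs.mul_const ω).sub_const I) ((hs.mul_const ω).add_const I) hden
  have hcaynorm : ∀ z ∈ ball (0:ℂ) 1, ‖(s z * ω - I) / (s z * ω + I)‖ = 1 := by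
    intro z hz
    have hnum : s z * ω - I = conj (s z * ω + I) := by
      rw [map_add, Complex.conj_I, hgreal z hz]; ring
    rw [norm_div, hnum, RCLike.norm_conj, div_self]
    rw [norm_ne_zero_iff]
    exact hden z hz
  have hcayc : ∀ z ∈ ball (0:ℂ) 1,
      (s z * ω - I) / (s z * ω + I) = (s 0 * ω - I) / (s 0 * ω + I) := by
    have hmax : IsMaxOn (norm ∘ fun z => (s z * ω - I) / (s z * ω + I)) (ball (0:ℂ) 1) 0 := by
      intro z hz
      exact le_of_eq ((hcaynorm z hz).trans (hcaynorm 0 h0).symm)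
    exact fun z hz => Complex.eqOn_of_isPreconnected_of_isMaxOn_norm
      (convex_ball (0:ℂ) 1).isPreconnected isOpen_ball hcayd h0 hmax hz
  have hsc : ∀ z ∈ ball (0:ℂ) 1, s z * ω = s 0 * ω := by
    intro z hz
    have hcross : (s z * ω - I) * (s 0 * ω + I) = (s 0 * ω - I) * (s z * ω + I) :=
      (div_eq_div_iff (hden z hz) (hden 0 h0)).1 (hcayc z hz)
    linear_combination (-Complex.I / 2) * hcross + (s z * ω - s 0 * ω) * Complex.I_mul_I
  -- extract the real constant x
  set x : ℝ := (s 0 * ω).re with hxdef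
  have hg0 : s 0 * ω = (x : ℂ) := by
    have := hgreal 0 h0
    exact (Complex.conj_eq_iff_re.1 this).symm ▸ (Complex.conj_eq_iff_re.1 this)
  have hsx : ∀ z ∈ ball (0:ℂ) 1, s z = (x : ℂ) * conj ω := by
    intro z hz
    have h1 : s z * ω = (x : ℂ) := (hsc z hz).trans hg0
    linear_combination conj ω * h1 - s z * hωc
  have hxle : |x| ≤ 2 := by
    calc |x| = |(s 0 * ω).re| := rfl
      _ ≤ ‖s 0 * ω‖ := Complex.abs_re_le_norm _
      _ = ‖s 0‖ * ‖ω‖ := by rw [norm_mul]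
      _ ≤ 2 := by rw [hω1, mul_one]; exact (hbd 0 h0).2
  refine ⟨⟨ω, x, hω1, abs_le.1 hxle, fun z hz => ⟨hsx z hz, hpz z hz⟩⟩, hs, hp, hmaps, ?_⟩
  refine Filter.Eventually.of_forall (fun θ => ⟨(x : ℂ) * conj ω, (conj ω) ^ 2, ?_, ?_, ?_, ?_, ?_⟩)
  · have hmem : Ioo (0:ℝ) 1 ∈ nhdsWithin (1:ℝ) (Iio 1) :=
      Ioo_mem_nhdsLT_of_mem (by constructor <;> norm_num)
    refine tendsto_const_nhds.congr' ?_
    filter_upwards [hmem] with r hr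
    exact (hsx _ (radial_mem_ball θ r hr)).symm
  · have hmem : Ioo (0:ℝ) 1 ∈ nhdsWithin (1:ℝ) (Iio 1) :=
      Ioo_mem_nhdsLT_of_mem (by constructor <;> norm_num)
    refine tendsto_const_nhds.congr' ?_
    filter_upwards [hmem] with r hr
    exact (hpz _ (radial_mem_ball θ r hr)).symm
  · rw [norm_pow, RCLike.norm_conj, hω1]; norm_num
  · rw [norm_mul, RCLike.norm_conj, hω1, mul_one, Complex.norm_real, Real.norm_eq_abs]
    exact hxle
  · rw [map_mul, Complex.conj_conj, Complex.conj_ofReal]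
    linear_combination (-(x:ℂ) * conj ω) * hωc
end
end

section
/- Let ψ be a rational inner function on 𝔻 of degree d(ψ) ≥ 1 and define h_ψ(λ) = (λ + λψ(λ), λ²ψ(λ)). Then the royal nodes of h_ψ on 𝕋 are exactly the d(ψ) solutions on 𝕋 of ψ(λ) = 1, and at each such royal node ω_j, ½\overline{s_ψ(ω_j)} = \overline{ω_j}. -/
open Complex Metric Set MeasureTheory Filter ComplexConjugate

noncomputable section

open Polynomial in
lemma derivative_finset_prod {ι R : Type*} [CommSemiring R] [DecidableEq ι]
    (s : Finset ι) (f : ι → R[X]) :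
    Polynomial.derivative (∏ i ∈ s, f i)
      = ∑ i ∈ s, (∏ j ∈ s.erase i, f j) * Polynomial.derivative (f i) := by
  rw [Finset.prod_eq_multiset_prod, derivative_prod, Finset.sum_eq_multiset_sum]
  refine congrArg Multiset.sum (Multiset.map_congr rfl fun i _ => ?_)
  simp [Finset.prod_eq_multiset_prod, Finset.erase_val]

lemma normSq_factor_key (z a : ℂ) : Complex.normSq (1 - conj a * z) - Complex.normSq (z - a)
    = (1 - Complex.normSq z) * (1 - Complex.normSq a) := by
  simp only [Complex.normSq_apply, Complex.mul_re, Complex.mul_im, Complex.sub_re,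
    Complex.sub_im, Complex.one_re, Complex.one_im, Complex.conj_re, Complex.conj_im]
  ring

lemma normSq_eq_norm_sq' (z : ℂ) : Complex.normSq z = ‖z‖ ^ 2 := by
  rw [Complex.normSq_eq_norm_sq]

lemma mul_conj_of_norm_one {a : ℂ} (h : ‖a‖ = 1) : a * conj a = 1 := by
  rw [Complex.mul_conj, normSq_eq_norm_sq' a, h]; norm_num

lemma blaschke_term_identity (a α c A B q : ℂ) (hu : a - α ≠ 0)
    (h1 : (a - α) * (c * A) = q) (h2 : (1 - conj α * a) * B = q)
    (ha : a * conj a = 1) :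
    a * (c * A) - a * (B * (-(conj α)))
      = (((1 - Complex.normSq α) / Complex.normSq (a - α) : ℝ) : ℂ) * q := by
  have hnsu : ((Complex.normSq (a - α) : ℝ) : ℂ) ≠ 0 :=
    Complex.ofReal_ne_zero.mpr (Complex.normSq_pos.mpr hu).ne'
  have hcu : ((Complex.normSq (a - α) : ℝ) : ℂ) = (a - α) * conj (a - α) :=
    (Complex.mul_conj _).symm
  have hca : ((Complex.normSq α : ℝ) : ℂ) = α * conj α := (Complex.mul_conj _).symm
  rw [Complex.ofReal_div, div_mul_eq_mul_div, eq_div_iff hnsu, Complex.ofReal_sub,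
    Complex.ofReal_one, hcu, hca]
  simp only [map_sub]
  linear_combination (a * (conj a - conj α)) * h1 + (conj α * (a - α)) * h2 +
    (conj α * (a - α) * B + q) * ha

open Polynomial in
lemma blaschke_circle_solutions_card (ψ : ℂ → ℂ) (d : ℕ) (hd : 1 ≤ d) (c : ℂ)
    (α : Fin d → ℂ) (hc : ‖c‖ = 1) (hα : ∀ j, ‖α j‖ < 1)
    (hval : ∀ z : ℂ, ψ z = c * ∏ j, (z - α j) / (1 - conj (α j) * z)) :
    {lam : ℂ | ‖lam‖ = 1 ∧ ψ lam = 1}.ncard = d := by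
  classical
  have hne : Nonempty (Fin d) := ⟨⟨0, hd⟩⟩
  set P : Polynomial ℂ := Polynomial.C c * ∏ j, (X - Polynomial.C (α j)) with hP
  set Q : Polynomial ℂ := ∏ j : Fin d, (1 - Polynomial.C (conj (α j)) * X) with hQdef
  set R : Polynomial ℂ := P - Q with hRdef
  have hc0 : c ≠ 0 := fun h => by simp [h] at hc
  have hPeval : ∀ z : ℂ, P.eval z = c * ∏ j, (z - α j) := by
    intro z; simp [hP, Polynomial.eval_prod]
  have hQeval : ∀ z : ℂ, Q.eval z = ∏ j, (1 - conj (α j) * z) := by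
    intro z; simp [hQdef, Polynomial.eval_prod]
  have hQne : ∀ z : ℂ, ‖z‖ ≤ 1 → ∀ j, (1 - conj (α j) * z) ≠ 0 := by
    intro z hz j h
    have h1 : ‖conj (α j) * z‖ < 1 := by
      rw [norm_mul, RCLike.norm_conj]
      calc ‖α j‖ * ‖z‖ ≤ ‖α j‖ * 1 := mul_le_mul_of_nonneg_left hz (norm_nonneg _)
        _ < 1 := by rw [mul_one]; exact hα j
    have h2 : conj (α j) * z = 1 := by linear_combination -h
    rw [h2] at h1; simp at h1
  have hQne' : ∀ z : ℂ, ‖z‖ ≤ 1 → Q.eval z ≠ 0 := by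
    intro z hz
    rw [hQeval]; exact Finset.prod_ne_zero_iff.mpr fun j _ => hQne z hz j
  have hpsiQ : ∀ z : ℂ, (∀ j, (1 - conj (α j) * z) ≠ 0) → ψ z * Q.eval z = P.eval z := by
    intro z hz
    rw [hval z, hQeval, hPeval, mul_assoc, ← Finset.prod_mul_distrib]
    congr 1
    exact Finset.prod_congr rfl fun j _ => div_mul_cancel₀ _ (hz j)
  -- all roots of R lie on the circle and satisfy ψ = 1
  have hroot_iff : ∀ z : ℂ, R.eval z = 0 ↔ (‖z‖ = 1 ∧ ψ z = 1) := by
    intro z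
    constructor
    · intro hz
      have hPQ : P.eval z = Q.eval z := by
        rw [hRdef, eval_sub] at hz; linear_combination hz
      have hnorm : ‖z‖ = 1 := by
        by_contra hne1
        have hQz : Q.eval z ≠ 0 := by
          intro h0
          have hP0 : P.eval z = 0 := by rw [hPQ, h0]
          rw [hPeval] at hP0
          rcases mul_eq_zero.mp hP0 with h | h
          · exact hc0 h
          · obtain ⟨j, _, hj⟩ := Finset.prod_eq_zero_iff.mp h
            have hzαj : z = α j := by linear_combination hj
            have hzn : ‖z‖ ≤ 1 := by rw [hzαj]; exact (hα j).le
            exact hQne' z hzn h0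
        have hune : ∀ j, z - α j ≠ 0 := by
          intro j h
          have hP0 : P.eval z = 0 := by
            rw [hPeval, Finset.prod_eq_zero (Finset.mem_univ j) h, mul_zero]
          exact hQz (hPQ ▸ hP0)
        have hPQn : ∏ j, ‖z - α j‖ = ∏ j, ‖1 - conj (α j) * z‖ := by
          have h := congrArg norm hPQ
          rwa [hPeval, hQeval, norm_mul, hc, one_mul, norm_prod, norm_prod] at h
        rcases lt_or_gt_of_ne hne1 with hlt | hgt
        · have hstep : ∀ j : Fin d, ‖z - α j‖ < ‖1 - conj (α j) * z‖ := by
            intro j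
            have hk := normSq_factor_key z (α j)
            rw [normSq_eq_norm_sq', normSq_eq_norm_sq', normSq_eq_norm_sq',
              normSq_eq_norm_sq'] at hk
            have pz : 0 < 1 - ‖z‖ ^ 2 := by nlinarith [norm_nonneg z]
            have pa : 0 < 1 - ‖α j‖ ^ 2 := by nlinarith [norm_nonneg (α j), hα j]
            have h2 : ‖z - α j‖ ^ 2 < ‖1 - conj (α j) * z‖ ^ 2 := by
              nlinarith [mul_pos pz pa]
            exact lt_of_pow_lt_pow_left₀ 2 (norm_nonneg _) h2
          have hprod : ∏ j, ‖z - α j‖ < ∏ j, ‖1 - conj (α j) * z‖ :=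
            Finset.prod_lt_prod_of_nonempty (fun j _ => norm_pos_iff.mpr (hune j))
              (fun j _ => hstep j) Finset.univ_nonempty
          rw [hPQn] at hprod; exact lt_irrefl _ hprod
        · have hvne : ∀ j, (1 - conj (α j) * z) ≠ 0 := by
            intro j h
            apply hQz
            rw [hQeval, Finset.prod_eq_zero (Finset.mem_univ j) h]
          have hstep : ∀ j : Fin d, ‖1 - conj (α j) * z‖ < ‖z - α j‖ := by
            intro j
            have hk := normSq_factor_key z (α j)
            rw [normSq_eq_norm_sq', normSq_eq_norm_sq', normSq_eq_norm_sq',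
              normSq_eq_norm_sq'] at hk
            have pz : 1 - ‖z‖ ^ 2 < 0 := by nlinarith [norm_nonneg z]
            have pa : 0 < 1 - ‖α j‖ ^ 2 := by nlinarith [norm_nonneg (α j), hα j]
            have h2 : ‖1 - conj (α j) * z‖ ^ 2 < ‖z - α j‖ ^ 2 := by
              nlinarith [mul_neg_of_neg_of_pos pz pa]
            exact lt_of_pow_lt_pow_left₀ 2 (norm_nonneg _) h2
          have hprod : ∏ j, ‖1 - conj (α j) * z‖ < ∏ j, ‖z - α j‖ :=
            Finset.prod_lt_prod_of_nonempty (fun j _ => norm_pos_iff.mpr (hvne j))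
              (fun j _ => hstep j) Finset.univ_nonempty
          rw [hPQn] at hprod; exact lt_irrefl _ hprod
      refine ⟨hnorm, ?_⟩
      have h3 := hpsiQ z (hQne z hnorm.le)
      have h4 : ψ z * Q.eval z = 1 * Q.eval z := by rw [h3, hPQ, one_mul]
      exact mul_right_cancel₀ (hQne' z hnorm.le) h4
    · rintro ⟨h1, h2⟩
      have h3 := hpsiQ z (hQne z h1.le)
      rw [h2, one_mul] at h3
      rw [hRdef, eval_sub]; rw [← h3]; ring
  -- degree of R
  have hprodmonic : (∏ j : Fin d, (X - Polynomial.C (α j))).Monic :=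
    monic_prod_of_monic _ _ fun j _ => monic_X_sub_C _
  have hproddeg : (∏ j : Fin d, (X - Polynomial.C (α j))).natDegree = d := by
    rw [natDegree_prod_of_monic _ _ fun j _ => monic_X_sub_C _]
    simp
  have hPdeg : P.natDegree = d := by
    rw [hP, natDegree_C_mul hc0, hproddeg]
  have hPcoeff : P.coeff d = c := by
    have h2 := hprodmonic.coeff_natDegree
    rw [hproddeg] at h2
    rw [hP, coeff_C_mul, h2, mul_one]
  have hQdeg : Q.natDegree ≤ d := by
    have hfac : ∀ j : Fin d, (1 - Polynomial.C (conj (α j)) * X).natDegree ≤ 1 := by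
      intro j
      refine le_trans (natDegree_sub_le _ _) (max_le (by simp) ?_)
      exact le_trans (natDegree_C_mul_le _ _) natDegree_X_le
    refine le_trans (natDegree_prod_le _ _)
      (le_trans (Finset.sum_le_sum fun j _ => hfac j) ?_)
    simp
  have hQcoeff : Q.coeff d = ∏ j, (-(conj (α j))) := by
    have h3 := coeff_prod_of_natDegree_le (s := Finset.univ)
      (fun j : Fin d => (1 - Polynomial.C (conj (α j)) * X)) 1 ?_
    · simpa [coeff_one] using h3
    · intro p _
      refine le_trans (natDegree_sub_le _ _) ?_
      simp only [natDegree_one, Nat.zero_le, max_le_iff, true_and]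
      exact le_trans (natDegree_C_mul_le _ _) natDegree_X_le
  have hQcn : ‖Q.coeff d‖ < 1 := by
    rw [hQcoeff]
    have h1 : ‖∏ j, (-(conj (α j)))‖ = ∏ j, ‖α j‖ := by
      rw [norm_prod]
      exact Finset.prod_congr rfl fun j _ => by rw [norm_neg, RCLike.norm_conj]
    rw [h1]
    obtain ⟨j0⟩ := hne
    calc ∏ j, ‖α j‖ = ‖α j0‖ * ∏ j ∈ Finset.univ.erase j0, ‖α j‖ := by
          rw [← Finset.mul_prod_erase _ _ (Finset.mem_univ j0)]
      _ ≤ ‖α j0‖ * 1 := by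
          refine mul_le_mul_of_nonneg_left ?_ (norm_nonneg _)
          exact Finset.prod_le_one (fun j _ => norm_nonneg _) (fun j _ => (hα j).le)
      _ < 1 := by rw [mul_one]; exact hα j0
  have hRcoeff : R.coeff d ≠ 0 := by
    rw [hRdef, coeff_sub, hPcoeff]
    intro h
    have h5 : c = Q.coeff d := by linear_combination h
    rw [← h5, hc] at hQcn
    norm_num at hQcn
  have hR0 : R ≠ 0 := fun h => hRcoeff (by simp [h])
  have hRdeg : R.natDegree = d := by
    refine le_antisymm ?_ (le_natDegree_of_ne_zero hRcoeff)
    rw [hRdef]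
    exact le_trans (natDegree_sub_le _ _) (max_le hPdeg.le hQdeg)
  -- roots are simple
  have hderiv : ∀ a : ℂ, R.eval a = 0 → (Polynomial.derivative R).eval a ≠ 0 := by
    intro a ha hzero
    obtain ⟨ha1, hpsa⟩ := (hroot_iff a).mp ha
    have hune : ∀ j, a - α j ≠ 0 := by
      intro j h
      have h6 : a = α j := by linear_combination h
      rw [h6] at ha1
      exact (hα j).ne ha1
    have hvne := hQne a ha1.le
    have hq := hQne' a ha1.le
    have hPa : P.eval a = Q.eval a := by
      rw [← hpsiQ a hvne, hpsa, one_mul]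
    have haconj : a * conj a = 1 := mul_conj_of_norm_one ha1
    have hPderiv : (Polynomial.derivative P).eval a
        = ∑ j, c * ∏ k ∈ Finset.univ.erase j, (a - α k) := by
      rw [hP, derivative_C_mul, derivative_finset_prod]
      simp [eval_finset_sum, eval_prod, Finset.mul_sum]
    have hQderiv : (Polynomial.derivative Q).eval a
        = ∑ j, (∏ k ∈ Finset.univ.erase j, (1 - conj (α k) * a)) * (-(conj (α j))) := by
      rw [hQdef, derivative_finset_prod]
      simp [eval_finset_sum, eval_prod]
    have hterm : ∀ j : Fin d,
        a * (c * ∏ k ∈ Finset.univ.erase j, (a - α k))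
          - a * ((∏ k ∈ Finset.univ.erase j, (1 - conj (α k) * a)) * (-(conj (α j))))
        = (((1 - Complex.normSq (α j)) / Complex.normSq (a - α j) : ℝ) : ℂ) * Q.eval a := by
      intro j
      refine blaschke_term_identity a (α j) c _ _ _ (hune j) ?_ ?_ haconj
      · rw [← hPa, hPeval, ← Finset.mul_prod_erase _ _ (Finset.mem_univ j)]
        ring
      · rw [hQeval, ← Finset.mul_prod_erase _ _ (Finset.mem_univ j)]
    have hsum : a * ((Polynomial.derivative R).eval a)
        = ((∑ j, (1 - Complex.normSq (α j)) / Complex.normSq (a - α j) : ℝ) : ℂ)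
            * Q.eval a := by
      rw [hRdef, derivative_sub, eval_sub, mul_sub, hPderiv, hQderiv,
        Finset.mul_sum, Finset.mul_sum, ← Finset.sum_sub_distrib,
        Complex.ofReal_sum, Finset.sum_mul]
      exact Finset.sum_congr rfl fun j _ => hterm j
    have hT : 0 < ∑ j, (1 - Complex.normSq (α j)) / Complex.normSq (a - α j) := by
      refine Finset.sum_pos (fun j _ => div_pos ?_ (Complex.normSq_pos.mpr (hune j)))
        Finset.univ_nonempty
      have := hα j
      rw [normSq_eq_norm_sq']
      nlinarith [norm_nonneg (α j)]
    rw [hzero, mul_zero] at hsum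
    exact (mul_ne_zero (Complex.ofReal_ne_zero.mpr hT.ne') hq) hsum.symm
  -- counting
  have hcard : Multiset.card R.roots = d := by
    rw [← hRdeg]
    exact Polynomial.splits_iff_card_roots.mp (IsAlgClosed.splits R)
  have hnodup : R.roots.Nodup := by
    rw [Multiset.nodup_iff_count_le_one]
    intro a
    rw [Polynomial.count_roots]
    by_contra hlt
    push_neg at hlt
    have h1 := (Polynomial.one_lt_rootMultiplicity_iff_isRoot hR0).mp hlt
    exact hderiv a h1.1 h1.2
  have hset : {lam : ℂ | ‖lam‖ = 1 ∧ ψ lam = 1} = ↑R.roots.toFinset := by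
    ext z
    simp only [Set.mem_setOf_eq, Finset.coe_sort_coe, Multiset.mem_toFinset, Finset.mem_coe,
      Polynomial.mem_roots hR0, Polynomial.IsRoot.def]
    exact (hroot_iff z).symm
  rw [hset, Set.ncard_coe_finset, Multiset.toFinset_card_of_nodup hnodup, hcard]

/-- For a rational inner function ψ of degree d ≥ 1 and
h_ψ(λ) = (λ + λψ(λ), λ²ψ(λ)), the royal nodes of h_ψ on 𝕋 are exactly the
points λ ∈ 𝕋 with ψ(λ) = 1, there are exactly d of them, and at each such royal
node ½·conj(s_ψ(λ)) = conj(λ). -/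
theorem royal_nodes_of_h_psi
    (ψ : ℂ → ℂ) (d : ℕ) (hd : 1 ≤ d) (hψ : IsBlaschkeOfDegree ψ d) :
    (∀ lam : ℂ, ‖lam‖ = 1 →
      ((lam + lam * ψ lam) ^ 2 = 4 * (lam ^ 2 * ψ lam) ↔ ψ lam = 1)) ∧
    {lam : ℂ | ‖lam‖ = 1 ∧ ψ lam = 1}.ncard = d ∧
    (∀ lam : ℂ, ‖lam‖ = 1 → ψ lam = 1 →
      (1/2) * conj (lam + lam * ψ lam) = conj lam) := by
  obtain ⟨c, α, hc, hα, hval⟩ := hψ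
  refine ⟨?_, ?_, ?_⟩
  · intro lam hl
    constructor
    · intro h
      have h0 : lam ≠ 0 := fun hz => by simp [hz] at hl
      have h2 : (lam * (1 - ψ lam)) ^ 2 = 0 := by linear_combination h
      rcases mul_eq_zero.mp ((pow_eq_zero_iff (by norm_num : (2:ℕ) ≠ 0)).mp h2) with h3 | h3
      · exact absurd h3 h0
      · linear_combination -h3
    · intro h; rw [h]; ring
  · exact blaschke_circle_solutions_card ψ d hd c α hc hα hval
  · intro lam _ h
    simp only [h, mul_one, ← two_mul, map_mul, Complex.conj_ofNat]; ring
end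
end
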